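/- arXiv:2412.17927 — 5 statements merged into one kernel-verified Lean document; each statement's English description precedes it below -/
import Mathlib

section
/- Let $I = [t_0, \infty)$ and suppose $f, g, h : I \to \mathbb{R}$ are continuous functions such that $f$ is bounded, $g$ is non-increasing, $h$ is non-negative and integrable on $I$, and $f(t) \le g(t) + \int_t^\infty h(s) f(s)\, ds$ for all $t \in I$. Then $f(t) \le g(t) \exp\left(\int_t^\infty h(s)\, ds\right)$ for all $t \in I$. -/
open MeasureTheory Set Filter
open Topology

lemma aux_rep (u : ℝ → ℝ) (hu : Integrable u) (a t : ℝ) :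
    (∫ s in Set.Ioi t, u s) = (∫ s in Set.Ioi a, u s) - ∫ s in a..t, u s := by
  have h1 := intervalIntegral.integral_Iic_add_Ioi (b := t) hu.integrableOn hu.integrableOn
  have h2 := intervalIntegral.integral_Iic_add_Ioi (b := a) hu.integrableOn hu.integrableOn
  have h3 := intervalIntegral.integral_Iic_sub_Iic (a := a) (b := t) (f := u)
    hu.integrableOn hu.integrableOn
  linarith

lemma aux_cont (u : ℝ → ℝ) (hu : Integrable u) :
    Continuous (fun t => ∫ s in Set.Ioi t, u s) := by
  have : (fun t => ∫ s in Set.Ioi t, u s)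
      = fun t => (∫ s in Set.Ioi 0, u s) - ∫ s in (0:ℝ)..t, u s := by
    funext t; exact aux_rep u hu 0 t
  rw [this]
  exact continuous_const.sub (hu.continuous_primitive 0)

lemma aux_deriv (u : ℝ → ℝ) (hu : Integrable u) {t : ℝ} (hc : ContinuousAt u t) :
    HasDerivAt (fun x => ∫ s in Set.Ioi x, u s) (-(u t)) t := by
  have heq : (fun x => ∫ s in Set.Ioi x, u s)
      = fun x => (∫ s in Set.Ioi 0, u s) - ∫ s in (0:ℝ)..x, u s := by
    funext x; exact aux_rep u hu 0 x
  rw [heq]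
  have hd : HasDerivAt (fun x => ∫ s in (0:ℝ)..x, u s) (u t) t := by
    refine intervalIntegral.integral_hasDerivAt_right hu.intervalIntegrable
      ⟨Set.univ, univ_mem, hu.aestronglyMeasurable.restrict⟩ hc
  have := (hasDerivAt_const t (∫ s in Set.Ioi 0, u s)).sub hd
  rw [zero_sub] at this
  exact this

lemma aux_tendsto (u : ℝ → ℝ) (hu : Integrable u) :
    Tendsto (fun t => ∫ s in Set.Ioi t, u s) atTop (𝓝 0) := by
  have heq : (fun t => ∫ s in Set.Ioi t, u s)
      = fun t => (∫ s in Set.Ioi 0, u s) - ∫ s in (0:ℝ)..t, u s := by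
    funext t; exact aux_rep u hu 0 t
  rw [heq]
  have := intervalIntegral_tendsto_integral_Ioi 0 hu.integrableOn tendsto_id
  simpa using (tendsto_const_nhds (x := ∫ s in Set.Ioi 0, u s)).sub this


/-- Grönwall inequality on a half-infinite interval: if `f` is bounded and continuous,
`g` is continuous and non-increasing, `h` is continuous, non-negative and integrable on
`[t₀, ∞)`, and `f t ≤ g t + ∫_t^∞ h s f s ds`, then
`f t ≤ g t * exp (∫_t^∞ h s ds)` on `[t₀, ∞)`. -/
theorem stmt_0 (t₀ : ℝ) (f g h : ℝ → ℝ)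
    (hf : ContinuousOn f (Set.Ici t₀))
    (hg : ContinuousOn g (Set.Ici t₀))
    (hh : ContinuousOn h (Set.Ici t₀))
    (hbd : ∃ M : ℝ, ∀ t ∈ Set.Ici t₀, |f t| ≤ M)
    (hmono : AntitoneOn g (Set.Ici t₀))
    (hpos : ∀ t ∈ Set.Ici t₀, 0 ≤ h t)
    (hint : MeasureTheory.IntegrableOn h (Set.Ici t₀))
    (hineq : ∀ t ∈ Set.Ici t₀, f t ≤ g t + ∫ s in Set.Ioi t, h s * f s) :
    ∀ t ∈ Set.Ici t₀, f t ≤ g t * Real.exp (∫ s in Set.Ioi t, h s) := by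
  obtain ⟨M, hM⟩ := hbd
  have hIm : MeasurableSet (Set.Ici t₀) := measurableSet_Ici
  set h' : ℝ → ℝ := (Set.Ici t₀).indicator h with hh'def
  have hh'int : Integrable h' := (integrable_indicator_iff hIm).2 hint
  have hh'nn : ∀ s, 0 ≤ h' s := Set.indicator_nonneg hpos
  -- φ
  set φ : ℝ → ℝ := (Set.Ici t₀).indicator (fun s => h s * f s) with hφdef
  have hφcOn : ContinuousOn (fun s => h s * f s) (Set.Ici t₀) := hh.mul hf
  have hφIOn : IntegrableOn (fun s => h s * f s) (Set.Ici t₀) := by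
    refine Integrable.mono' (hint.const_mul M) (hφcOn.aestronglyMeasurable hIm) ?_
    rw [ae_restrict_iff' hIm]
    filter_upwards with s hs
    have h1 := hpos s hs
    have h2 := hM s hs
    have hMnn : (0:ℝ) ≤ M := (abs_nonneg _).trans h2
    rw [norm_mul, Real.norm_eq_abs, Real.norm_eq_abs, abs_of_nonneg h1]
    calc h s * |f s| ≤ h s * M := by nlinarith
      _ = M * h s := mul_comm _ _
  have hφint : Integrable φ := (integrable_indicator_iff hIm).2 hφIOn
  -- H and F
  set H : ℝ → ℝ := fun t => ∫ s in Set.Ioi t, h' s with hHdef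
  set F : ℝ → ℝ := fun t => ∫ s in Set.Ioi t, φ s with hFdef
  have Heq : ∀ t ∈ Set.Ici t₀, H t = ∫ s in Set.Ioi t, h s := by
    intro t ht
    exact setIntegral_congr_fun measurableSet_Ioi fun s hs =>
      Set.indicator_of_mem (le_trans ht (le_of_lt hs)) h
  have Feq : ∀ t ∈ Set.Ici t₀, F t = ∫ s in Set.Ioi t, h s * f s := by
    intro t ht
    exact setIntegral_congr_fun measurableSet_Ioi fun s hs =>
      Set.indicator_of_mem (le_trans ht (le_of_lt hs)) _
  have Hnn : ∀ t, 0 ≤ H t := fun t => setIntegral_nonneg measurableSet_Ioi fun s _ => hh'nn s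
  have Hcont : Continuous H := aux_cont h' hh'int
  have Fcont : Continuous F := aux_cont φ hφint
  have Econt : Continuous (fun t => Real.exp (-(H t))) := Real.continuous_exp.comp Hcont.neg
  have Ele1 : ∀ t, Real.exp (-(H t)) ≤ 1 := fun t =>
    Real.exp_le_one_iff.2 (neg_nonpos.2 (Hnn t))
  -- bound for g
  set B : ℝ := ∫ s, |φ s| with hBdef
  have hBnn : 0 ≤ B := integral_nonneg fun s => abs_nonneg _
  have hFbd : ∀ t, |F t| ≤ B := by
    intro t
    calc |F t| ≤ ∫ s in Set.Ioi t, |φ s| := by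
          simpa [Real.norm_eq_abs] using
            norm_integral_le_integral_norm (μ := volume.restrict (Set.Ioi t)) φ
      _ ≤ B := setIntegral_le_integral hφint.abs (Eventually.of_forall fun s => abs_nonneg _)
  have hMnn : (0:ℝ) ≤ M := (abs_nonneg _).trans (hM t₀ Set.self_mem_Ici)
  set Bg : ℝ := max |g t₀| (M + B) with hBgdef
  have hBgnn : 0 ≤ Bg := (abs_nonneg _).trans (le_max_left _ _)
  have hgbd : ∀ s ∈ Set.Ici t₀, |g s| ≤ Bg := by
    intro s hs
    have h1 : g s ≤ g t₀ := hmono Set.self_mem_Ici hs (Set.mem_Ici.1 hs)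
    have h2 : f s ≤ g s + F s := by rw [Feq s hs]; exact hineq s hs
    have h3 := hM s hs
    have h4 := hFbd s
    rw [abs_le]
    constructor
    · have : -M ≤ f s := (abs_le.1 h3).1
      have : -(M + B) ≤ g s := by
        have := (abs_le.1 h4).2
        linarith
      calc -Bg ≤ -(M + B) := neg_le_neg (le_max_right _ _)
        _ ≤ g s := this
    · exact h1.trans ((le_abs_self _).trans (le_max_left _ _))
  -- ψ and Ψ
  set ψ : ℝ → ℝ := (Set.Ici t₀).indicator (fun s => h s * g s * Real.exp (-(H s))) with hψdef
  have hψIOn : IntegrableOn (fun s => h s * g s * Real.exp (-(H s))) (Set.Ici t₀) := by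
    refine Integrable.mono' (hint.const_mul Bg) (((hh.mul hg).mul Econt.continuousOn).aestronglyMeasurable hIm) ?_
    rw [ae_restrict_iff' hIm]
    filter_upwards with s hs
    have h1 := hpos s hs
    have h2 := hgbd s hs
    have h3 := Ele1 s
    have h4 : (0:ℝ) < Real.exp (-(H s)) := Real.exp_pos _
    rw [norm_mul, norm_mul, Real.norm_eq_abs, Real.norm_eq_abs, Real.norm_eq_abs,
      abs_of_nonneg h1, abs_of_pos h4]
    calc h s * |g s| * Real.exp (-(H s))
        ≤ h s * Bg * Real.exp (-(H s)) :=
          mul_le_mul_of_nonneg_right (mul_le_mul_of_nonneg_left h2 h1) h4.le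
      _ ≤ h s * Bg * 1 := mul_le_mul_of_nonneg_left h3 (mul_nonneg h1 hBgnn)
      _ = Bg * h s := by ring
  have hψint : Integrable ψ := (integrable_indicator_iff hIm).2 hψIOn
  have φval : ∀ s, s ∈ Set.Ici t₀ → φ s = h s * f s := fun s hs => Set.indicator_of_mem hs _
  have h'val : ∀ s, s ∈ Set.Ici t₀ → h' s = h s := fun s hs => Set.indicator_of_mem hs _
  have ψval : ∀ s, s ∈ Set.Ici t₀ → ψ s = h s * g s * Real.exp (-(H s)) :=
    fun s hs => Set.indicator_of_mem hs _
  set Ψ : ℝ → ℝ := fun t => ∫ s in Set.Ioi t, ψ s with hΨdef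
  -- continuity at points of Ioi t₀ for the indicator functions
  have memnhds : ∀ t ∈ Set.Ioi t₀, Set.Ici t₀ ∈ 𝓝 t := fun t ht =>
    mem_of_superset (Ioi_mem_nhds ht) Set.Ioi_subset_Ici_self
  have indEq : ∀ (u : ℝ → ℝ), ∀ t ∈ Set.Ioi t₀, (Set.Ici t₀).indicator u =ᶠ[𝓝 t] u := by
    intro u t ht
    filter_upwards [Ioi_mem_nhds ht] with s hs
    exact Set.indicator_of_mem (le_of_lt hs) u
  have hφcAt : ∀ t ∈ Set.Ioi t₀, ContinuousAt φ t := fun t ht =>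
    (hφcOn.continuousAt (memnhds t ht)).congr (indEq _ t ht).symm
  have hh'cAt : ∀ t ∈ Set.Ioi t₀, ContinuousAt h' t := fun t ht =>
    (hh.continuousAt (memnhds t ht)).congr (indEq _ t ht).symm
  have hψcAt : ∀ t ∈ Set.Ioi t₀, ContinuousAt ψ t := fun t ht =>
    (((hh.mul hg).mul Econt.continuousOn).continuousAt (memnhds t ht)).congr (indEq _ t ht).symm
  -- derivatives
  have dF : ∀ t ∈ Set.Ioi t₀, HasDerivAt F (-(h t * f t)) t := by
    intro t ht
    have := aux_deriv φ hφint (hφcAt t ht)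
    rwa [φval t (Set.Ioi_subset_Ici_self ht)] at this
  have dH : ∀ t ∈ Set.Ioi t₀, HasDerivAt H (-(h t)) t := by
    intro t ht
    have := aux_deriv h' hh'int (hh'cAt t ht)
    rwa [h'val t (Set.Ioi_subset_Ici_self ht)] at this
  have dΨ : ∀ t ∈ Set.Ioi t₀, HasDerivAt Ψ (-(h t * g t * Real.exp (-(H t)))) t := by
    intro t ht
    have := aux_deriv ψ hψint (hψcAt t ht)
    rwa [ψval t (Set.Ioi_subset_Ici_self ht)] at this
  have dE : ∀ t ∈ Set.Ioi t₀,
      HasDerivAt (fun x => Real.exp (-(H x))) (Real.exp (-(H t)) * h t) t := by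
    intro t ht
    have := ((dH t ht).neg).exp
    simpa using this
  set A : ℝ → ℝ := fun t => F t * Real.exp (-(H t)) - Ψ t with hAdef
  have dA : ∀ t ∈ Set.Ioi t₀, HasDerivAt A
      ((-(h t * f t)) * Real.exp (-(H t)) + F t * (Real.exp (-(H t)) * h t)
        - (-(h t * g t * Real.exp (-(H t))))) t := by
    intro t ht
    exact ((dF t ht).mul (dE t ht)).sub (dΨ t ht)
  have dAnn : ∀ t ∈ Set.Ioi t₀, 0 ≤ (-(h t * f t)) * Real.exp (-(H t))
      + F t * (Real.exp (-(H t)) * h t) - (-(h t * g t * Real.exp (-(H t)))) := by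
    intro t ht
    have ht' : t ∈ Set.Ici t₀ := Set.Ioi_subset_Ici_self ht
    have h1 : f t ≤ g t + F t := by rw [Feq t ht']; exact hineq t ht'
    have h2 := hpos t ht'
    have h3 : (0:ℝ) < Real.exp (-(H t)) := Real.exp_pos _
    nlinarith [mul_nonneg (mul_nonneg h2 (le_of_lt h3)) (sub_nonneg.2 h1)]
  have Acont : Continuous A := (Fcont.mul Econt).sub (aux_cont ψ hψint)
  have Amono : MonotoneOn A (Set.Ici t₀) := by
    refine monotoneOn_of_deriv_nonneg (convex_Ici t₀) Acont.continuousOn ?_ ?_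
    · rw [interior_Ici]
      exact fun x hx => ((dA x hx).differentiableAt).differentiableWithinAt
    · rw [interior_Ici]
      intro x hx
      rw [(dA x hx).deriv]
      exact dAnn x hx
  have Etend : Tendsto (fun t => Real.exp (-(H t))) atTop (𝓝 1) := by
    have h1 : Tendsto (fun t => -(H t)) atTop (𝓝 0) := by
      simpa using (aux_tendsto h' hh'int).neg
    have := (Real.continuous_exp.tendsto 0).comp h1
    rw [Real.exp_zero] at this
    exact this
  have Atend : Tendsto A atTop (𝓝 0) := by
    have := ((aux_tendsto φ hφint).mul Etend).sub (aux_tendsto ψ hψint)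
    simpa using this
  have Anp : ∀ t ∈ Set.Ici t₀, A t ≤ 0 := by
    intro t ht
    refine ge_of_tendsto Atend ?_
    filter_upwards [eventually_ge_atTop t] with T hT
    exact Amono ht (le_trans ht hT) hT
  -- main estimate
  intro t ht
  have key : F t * Real.exp (-(H t)) ≤ Ψ t := by
    have := Anp t ht
    simp only [hAdef] at this
    linarith
  -- E integrand
  set E : ℝ → ℝ := fun s => h' s * Real.exp (-(H s)) with hEdef
  have hEint : Integrable E := by
    refine Integrable.mono' hh'int (hh'int.aestronglyMeasurable.mul Econt.aestronglyMeasurable) ?_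
    filter_upwards with s
    have h1 := hh'nn s
    have h3 := Ele1 s
    have h4 : (0:ℝ) < Real.exp (-(H s)) := Real.exp_pos _
    rw [norm_mul, Real.norm_eq_abs, Real.norm_eq_abs, abs_of_nonneg h1, abs_of_pos h4]
    nlinarith
  have Ecalc : (∫ s in Set.Ioi t, E s) = 1 - Real.exp (-(H t)) := by
    refine MeasureTheory.integral_Ioi_of_hasDerivAt_of_tendsto
      (Econt.continuousWithinAt) ?_ hEint.integrableOn Etend
    intro x hx
    have hx' : x ∈ Set.Ioi t₀ := Set.mem_Ioi.2 (lt_of_le_of_lt (Set.mem_Ici.1 ht) (Set.mem_Ioi.1 hx))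
    have := dE x hx'
    have hEx : E x = Real.exp (-(H x)) * h x := by
      show h' x * Real.exp (-(H x)) = _
      rw [h'val x (Set.Ioi_subset_Ici_self hx')]; ring
    rw [hEx]
    exact this
  have step : Ψ t ≤ g t * (1 - Real.exp (-(H t))) := by
    have hmon : Ψ t ≤ ∫ s in Set.Ioi t, g t * E s := by
      refine setIntegral_mono_on hψint.integrableOn
        ((hEint.const_mul (g t)).integrableOn) measurableSet_Ioi ?_
      intro s hs
      have hs' : s ∈ Set.Ici t₀ := Set.mem_Ici.2 (le_trans (Set.mem_Ici.1 ht) (le_of_lt (Set.mem_Ioi.1 hs)))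
      have hgs : g s ≤ g t := hmono ht hs' (le_of_lt hs)
      have h1 := hpos s hs'
      have h4 : (0:ℝ) < Real.exp (-(H s)) := Real.exp_pos _
      rw [ψval s hs']
      show _ ≤ g t * (h' s * Real.exp (-(H s)))
      rw [h'val s hs']
      nlinarith [mul_le_mul_of_nonneg_left hgs (mul_nonneg h1 h4.le)]
    calc Ψ t ≤ ∫ s in Set.Ioi t, g t * E s := hmon
      _ = g t * ∫ s in Set.Ioi t, E s := integral_const_mul _ _
      _ = g t * (1 - Real.exp (-(H t))) := by rw [Ecalc]
  -- conclude
  rw [← Heq t ht]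
  have h1 : f t ≤ g t + F t := by rw [Feq t ht]; exact hineq t ht
  have h3 : (0:ℝ) < Real.exp (-(H t)) := Real.exp_pos _
  have h5 : (0:ℝ) < Real.exp (H t) := Real.exp_pos _
  have h6 : Real.exp (-(H t)) * Real.exp (H t) = 1 := by
    rw [← Real.exp_add]; simp
  have h7 := mul_le_mul_of_nonneg_right (key.trans step) (le_of_lt h5)
  rw [mul_assoc, h6, mul_one] at h7
  have h8 : g t * (1 - Real.exp (-(H t))) * Real.exp (H t)
      = g t * Real.exp (H t) - g t * (Real.exp (-(H t)) * Real.exp (H t)) := by ring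
  rw [h8, h6, mul_one] at h7
  linarith
end

section
/- Let $a \in \mathbb{R}$ and $1 \le v_1 < v_2$. For a $C^1$ function $f$ of $v$ and a positive $C^1$ function $r$ of $v$ with $\lambda := r' > 0$, the following identity holds: $\frac{(a+1)^2}{4} \int_{v_1}^{v_2} r^a \lambda f^2\, dv + \int_{v_1}^{v_2} \frac{r^a}{\lambda} \left( r f' + \frac{a+1}{2} \lambda f \right)^2 dv + \frac{a+1}{2} r^{1+a} f^2|_{v_1} = \int_{v_1}^{v_2} \frac{r^{2+a}}{\lambda} (f')^2\, dv + \frac{a+1}{2} r^{1+a} f^2|_{v_2}$. -/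
open MeasureTheory Set

/-- Sharp Hardy inequality in completed-square form: for a `C¹` function `f` of `v` and a
positive `C¹` function `r` of `v` with `λ = r' > 0`,
`((a+1)²/4) ∫ r^a λ f² + ∫ (r^a/λ)(r f' + ((a+1)/2) λ f)² + ((a+1)/2) r^{1+a} f²|_{v₁}
  = ∫ (r^{2+a}/λ)(f')² + ((a+1)/2) r^{1+a} f²|_{v₂}`. -/
theorem stmt_5 (a v₁ v₂ : ℝ) (hv₁ : 1 ≤ v₁) (hv : v₁ < v₂)
    (f f' r l : ℝ → ℝ)
    (hf : ∀ v ∈ Set.Icc v₁ v₂, HasDerivAt f (f' v) v)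
    (hr : ∀ v ∈ Set.Icc v₁ v₂, HasDerivAt r (l v) v)
    (hrpos : ∀ v ∈ Set.Icc v₁ v₂, 0 < r v)
    (hlpos : ∀ v ∈ Set.Icc v₁ v₂, 0 < l v)
    (hf'c : ContinuousOn f' (Set.Icc v₁ v₂))
    (hlc : ContinuousOn l (Set.Icc v₁ v₂)) :
    (a + 1) ^ 2 / 4 * (∫ v in v₁..v₂, r v ^ a * l v * f v ^ 2)
      + (∫ v in v₁..v₂, r v ^ a / l v * (r v * f' v + (a + 1) / 2 * l v * f v) ^ 2)
      + (a + 1) / 2 * r v₁ ^ (1 + a) * f v₁ ^ 2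
    = (∫ v in v₁..v₂, r v ^ (2 + a) / l v * f' v ^ 2)
      + (a + 1) / 2 * r v₂ ^ (1 + a) * f v₂ ^ 2 := by
  have hle : v₁ ≤ v₂ := hv.le
  have huIcc : Set.uIcc v₁ v₂ = Set.Icc v₁ v₂ := Set.uIcc_of_le hle
  set c : ℝ := (a + 1) / 2 with hc
  -- continuity facts
  have hrc : ContinuousOn r (Set.Icc v₁ v₂) :=
    fun v hv => (hr v hv).continuousAt.continuousWithinAt
  have hfc : ContinuousOn f (Set.Icc v₁ v₂) :=
    fun v hv => (hf v hv).continuousAt.continuousWithinAt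
  have hrne : ∀ v ∈ Set.Icc v₁ v₂, r v ≠ 0 := fun v hv => (hrpos v hv).ne'
  have hlne : ∀ v ∈ Set.Icc v₁ v₂, l v ≠ 0 := fun v hv => (hlpos v hv).ne'
  have hrpow : ∀ p : ℝ, ContinuousOn (fun v => r v ^ p) (Set.Icc v₁ v₂) :=
    fun p => hrc.rpow_const (fun v hv => Or.inl (hrne v hv))
  -- the potential and its derivative
  set G : ℝ → ℝ := fun v => c * (r v ^ (1 + a) * f v ^ 2) with hG
  set G' : ℝ → ℝ := fun v =>
    c * ((l v * (1 + a) * r v ^ (1 + a - 1)) * f v ^ 2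
      + r v ^ (1 + a) * ((2 : ℕ) * f v ^ (2 - 1) * f' v)) with hG'
  have hGderiv : ∀ v ∈ Set.Icc v₁ v₂, HasDerivAt G (G' v) v := by
    intro v hv
    exact (((hr v hv).rpow_const (Or.inl (hrne v hv))).mul ((hf v hv).pow 2)).const_mul c
  have hG'c : ContinuousOn G' (Set.Icc v₁ v₂) := by
    apply ContinuousOn.const_smul ?_ c |>.congr (fun v hv => rfl)
    exact ((hlc.mul continuousOn_const).mul (hrpow _) |>.mul (hfc.pow 2)).add
      ((hrpow _).mul ((continuousOn_const.mul (hfc.pow 1)).mul hf'c))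
  have hG'int : IntervalIntegrable G' volume v₁ v₂ := by
    apply ContinuousOn.intervalIntegrable
    rwa [huIcc]
  have hFTC : (∫ v in v₁..v₂, G' v) = G v₂ - G v₁ := by
    apply intervalIntegral.integral_eq_sub_of_hasDerivAt
    · intro v hv; exact hGderiv v (huIcc ▸ hv)
    · exact hG'int
  -- integrability of the pieces
  have hint1 : IntervalIntegrable (fun v => r v ^ a * l v * f v ^ 2) volume v₁ v₂ := by
    apply ContinuousOn.intervalIntegrable
    rw [huIcc]; exact ((hrpow a).mul hlc).mul (hfc.pow 2)
  have hint2 : IntervalIntegrable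
      (fun v => r v ^ a / l v * (r v * f' v + c * l v * f v) ^ 2) volume v₁ v₂ := by
    apply ContinuousOn.intervalIntegrable
    rw [huIcc]
    exact ((hrpow a).div hlc hlne).mul
      (((hrc.mul hf'c).add ((continuousOn_const.mul hlc).mul hfc)).pow 2)
  have hint3 : IntervalIntegrable (fun v => r v ^ (2 + a) / l v * f' v ^ 2) volume v₁ v₂ := by
    apply ContinuousOn.intervalIntegrable
    rw [huIcc]; exact ((hrpow _).div hlc hlne).mul (hf'c.pow 2)
  -- pointwise identity
  have hpt : ∀ v ∈ Set.Icc v₁ v₂,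
      c ^ 2 * (r v ^ a * l v * f v ^ 2)
        + r v ^ a / l v * (r v * f' v + c * l v * f v) ^ 2
      = r v ^ (2 + a) / l v * f' v ^ 2 + G' v := by
    intro v hv
    have h1 : r v ^ (2 + a) = r v ^ 2 * r v ^ a := by
      rw [Real.rpow_add (hrpos v hv), Real.rpow_two]
    have h2 : r v ^ (1 + a) = r v * r v ^ a := by
      rw [Real.rpow_add (hrpos v hv), Real.rpow_one]
    have h3 : r v ^ (1 + a - 1) = r v ^ a := by norm_num
    simp only [hG', h1, h2, h3]
    have hl0 := hlne v hv
    field_simp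
    ring
  have hkey : (∫ v in v₁..v₂,
      (c ^ 2 * (r v ^ a * l v * f v ^ 2)
        + r v ^ a / l v * (r v * f' v + c * l v * f v) ^ 2))
      = ∫ v in v₁..v₂, (r v ^ (2 + a) / l v * f' v ^ 2 + G' v) := by
    apply intervalIntegral.integral_congr
    intro v hv
    exact hpt v (huIcc ▸ hv)
  rw [intervalIntegral.integral_add (hint1.const_mul _) hint2,
    intervalIntegral.integral_add hint3 hG'int, intervalIntegral.integral_const_mul,
    hFTC] at hkey
  have hc2 : (a + 1) ^ 2 / 4 = c ^ 2 := by rw [hc]; ring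
  rw [hc2]
  simp only [hG] at hkey
  linarith [hkey]
end

section
/- Let $\psi : [1, u] \times \{v\} \to \mathbb{R}$ be $C^1$ in the first variable, let $r : [1,u] \to (0,\infty)$ be $C^1$ and non-increasing with $r(1) \ge 1$, and let $\nu := r' < 0$. Suppose $|\psi(1)| \le r(1)^{-1} D$ and $\int_1^u \frac{r^2}{(-\nu)} (\psi')^2\, du' \le E^2$. Then $|\psi(u)| \le r(u)^{-1/2}(D + E)$. -/
open MeasureTheory Set

/-- Weighted fundamental-theorem-of-calculus plus Cauchy–Schwarz estimate: if `ψ` is `C¹`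
on `[1,u]`, `r` is `C¹`, positive, non-increasing with `r(1) ≥ 1` and `ν = r' < 0`,
`|ψ(1)| ≤ r(1)⁻¹ D` and `∫_1^u (r²/(-ν)) (ψ')² ≤ E²`, then
`|ψ(u)| ≤ r(u)^{-1/2} (D + E)`. -/
theorem stmt_9 (u D E : ℝ) (hu : 1 ≤ u) (hE : 0 ≤ E)
    (ψ ψ' r ν : ℝ → ℝ)
    (hψ : ∀ t ∈ Set.Icc (1 : ℝ) u, HasDerivAt ψ (ψ' t) t)
    (hr : ∀ t ∈ Set.Icc (1 : ℝ) u, HasDerivAt r (ν t) t)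
    (hν : ∀ t ∈ Set.Icc (1 : ℝ) u, ν t < 0)
    (hrpos : ∀ t ∈ Set.Icc (1 : ℝ) u, 0 < r t)
    (hrmono : AntitoneOn r (Set.Icc (1 : ℝ) u))
    (hr1 : 1 ≤ r 1)
    (hψ'c : ContinuousOn ψ' (Set.Icc (1 : ℝ) u))
    (hνc : ContinuousOn ν (Set.Icc (1 : ℝ) u))
    (hinit : |ψ 1| ≤ (r 1)⁻¹ * D)
    (hen : ∫ t in (1 : ℝ)..u, (r t) ^ 2 / (-ν t) * (ψ' t) ^ 2 ≤ E ^ 2) :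
    |ψ u| ≤ (r u) ^ (-(1/2) : ℝ) * (D + E) := by
  have hmem1 : (1:ℝ) ∈ Icc (1:ℝ) u := ⟨le_refl 1, hu⟩
  have hmemu : u ∈ Icc (1:ℝ) u := ⟨hu, le_refl u⟩
  have hrc : ContinuousOn r (Icc (1:ℝ) u) :=
    fun t ht => (hr t ht).continuousAt.continuousWithinAt
  have hrne : ∀ t ∈ Icc (1:ℝ) u, r t ≠ 0 := fun t ht => (hrpos t ht).ne'
  have hνpos : ∀ t ∈ Icc (1:ℝ) u, 0 < -ν t := fun t ht => neg_pos.2 (hν t ht)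
  set f : ℝ → ℝ := fun t => r t / Real.sqrt (-ν t) * ψ' t with hf_def
  set g : ℝ → ℝ := fun t => Real.sqrt (-ν t) / r t with hg_def
  have hfc : ContinuousOn f (Icc (1:ℝ) u) :=
    (hrc.div (hνc.neg.sqrt) (fun t ht => (Real.sqrt_pos.2 (hνpos t ht)).ne')).mul hψ'c
  have hgc : ContinuousOn g (Icc (1:ℝ) u) := (hνc.neg.sqrt).div hrc hrne
  -- FTC for ψ
  have ftc1 : ∫ t in (1:ℝ)..u, ψ' t = ψ u - ψ 1 := by
    apply intervalIntegral.integral_eq_sub_of_hasDerivAt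
    · intro t ht
      exact hψ t (by rwa [uIcc_of_le hu] at ht)
    · exact (hψ'c.mono (by rw [uIcc_of_le hu])).intervalIntegrable
  -- FTC for 1/r
  have ftc2 : ∫ t in (1:ℝ)..u, (-ν t) / (r t)^2 = (r u)⁻¹ - (r 1)⁻¹ := by
    apply intervalIntegral.integral_eq_sub_of_hasDerivAt
    · intro t ht
      rw [uIcc_of_le hu] at ht
      have := (hr t ht).inv (hrne t ht)
      exact this
    · apply ContinuousOn.intervalIntegrable
      rw [uIcc_of_le hu]
      exact hνc.neg.div (hrc.pow 2) (fun t ht => pow_ne_zero 2 (hrne t ht))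
  -- Cauchy-Schwarz
  have hpq : Real.HolderConjugate 2 2 := Real.HolderConjugate.two_two
  have h2 : ENNReal.ofReal (2:ℝ) = 2 := by simp
  have hfm : MemLp f (ENNReal.ofReal (2:ℝ)) (volume.restrict (Icc (1:ℝ) u)) := by
    rw [h2]
    refine (memLp_two_iff_integrable_sq ?_).2 ?_
    · exact hfc.aestronglyMeasurable measurableSet_Icc
    · exact ((hfc.pow 2).integrableOn_compact isCompact_Icc)
  have hgm : MemLp g (ENNReal.ofReal (2:ℝ)) (volume.restrict (Icc (1:ℝ) u)) := by
    rw [h2]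
    refine (memLp_two_iff_integrable_sq ?_).2 ?_
    · exact hgc.aestronglyMeasurable measurableSet_Icc
    · exact ((hgc.pow 2).integrableOn_compact isCompact_Icc)
  have CS := MeasureTheory.integral_mul_norm_le_Lp_mul_Lq hpq hfm hgm
  -- identify the pieces
  have hIcc_Ioc : ∀ h : ℝ → ℝ, ∫ t in Icc (1:ℝ) u, h t = ∫ t in Ioc (1:ℝ) u, h t :=
    fun h => integral_Icc_eq_integral_Ioc
  have eabs : ∫ t in Icc (1:ℝ) u, ‖f t‖ * ‖g t‖ = ∫ t in Icc (1:ℝ) u, |ψ' t| := by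
    apply setIntegral_congr_fun measurableSet_Icc
    intro t ht
    have hs : Real.sqrt (-ν t) ≠ 0 := (Real.sqrt_pos.2 (hνpos t ht)).ne'
    simp only [Real.norm_eq_abs]
    rw [← abs_mul]
    have hrn : r t ≠ 0 := hrne t ht
    have : f t * g t = ψ' t := by
      simp only [hf_def, hg_def]
      field_simp
    rw [this]
  have ef : ∫ t in Icc (1:ℝ) u, ‖f t‖ ^ (2:ℝ) = ∫ t in (1:ℝ)..u, (r t)^2 / (-ν t) * (ψ' t)^2 := by
    rw [intervalIntegral.integral_of_le hu, ← hIcc_Ioc]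
    apply setIntegral_congr_fun measurableSet_Icc
    intro t ht
    have hs : (0:ℝ) < -ν t := hνpos t ht
    simp only [Real.norm_eq_abs]
    rw [show ((2:ℝ)) = ((2:ℕ):ℝ) by norm_num, Real.rpow_natCast, sq_abs]
    simp only [hf_def]
    rw [mul_pow, div_pow, Real.sq_sqrt hs.le]
  have eg : ∫ t in Icc (1:ℝ) u, ‖g t‖ ^ (2:ℝ) = (r u)⁻¹ - (r 1)⁻¹ := by
    rw [← ftc2, intervalIntegral.integral_of_le hu, ← hIcc_Ioc]
    apply setIntegral_congr_fun measurableSet_Icc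
    intro t ht
    have hs : (0:ℝ) < -ν t := hνpos t ht
    simp only [Real.norm_eq_abs]
    rw [show ((2:ℝ)) = ((2:ℕ):ℝ) by norm_num, Real.rpow_natCast, sq_abs]
    simp only [hg_def]
    rw [div_pow, Real.sq_sqrt hs.le]
  rw [eabs, ef, eg] at CS
  -- bound the factors
  have hruinv : (0:ℝ) < (r u)⁻¹ := inv_pos.2 (hrpos u hmemu)
  have hEbd : (∫ t in (1:ℝ)..u, (r t)^2 / (-ν t) * (ψ' t)^2) ^ ((1:ℝ)/2) ≤ E := by
    have hnn : 0 ≤ ∫ t in (1:ℝ)..u, (r t)^2 / (-ν t) * (ψ' t)^2 := by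
      apply intervalIntegral.integral_nonneg hu
      intro t ht
      have := hνpos t ht
      positivity
    calc (∫ t in (1:ℝ)..u, (r t)^2 / (-ν t) * (ψ' t)^2) ^ ((1:ℝ)/2)
        ≤ (E^2) ^ ((1:ℝ)/2) := Real.rpow_le_rpow hnn hen (by norm_num)
      _ = E := by
          rw [← Real.rpow_natCast E 2, ← Real.rpow_mul hE]
          norm_num
  have hgbd : ((r u)⁻¹ - (r 1)⁻¹) ^ ((1:ℝ)/2) ≤ (r u) ^ (-(1/2) : ℝ) := by
    have h1 : (r u)⁻¹ - (r 1)⁻¹ ≤ (r u)⁻¹ := by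
      have : 0 ≤ (r 1)⁻¹ := le_of_lt (inv_pos.2 (lt_of_lt_of_le one_pos hr1))
      linarith
    have hnn : 0 ≤ (r u)⁻¹ - (r 1)⁻¹ := by
      have := inv_anti₀ (hrpos u hmemu) (hrmono hmem1 hmemu hu)
      linarith
    calc ((r u)⁻¹ - (r 1)⁻¹) ^ ((1:ℝ)/2) ≤ ((r u)⁻¹) ^ ((1:ℝ)/2) :=
          Real.rpow_le_rpow hnn h1 (by norm_num)
      _ = (r u) ^ (-(1/2) : ℝ) := by
          rw [← Real.rpow_neg_one (r u), ← Real.rpow_mul (hrpos u hmemu).le]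
          norm_num
  -- initial data bound
  have hDnn : 0 ≤ D := by
    have h0 : (0:ℝ) ≤ (r 1)⁻¹ * D := le_trans (abs_nonneg _) hinit
    have hr1p : (0:ℝ) < (r 1)⁻¹ := inv_pos.2 (lt_of_lt_of_le one_pos hr1)
    nlinarith
  have hinitbd : |ψ 1| ≤ (r u) ^ (-(1/2) : ℝ) * D := by
    refine le_trans hinit (mul_le_mul_of_nonneg_right ?_ hDnn)
    have hrup : 0 < r u := hrpos u hmemu
    have hrur1 : r u ≤ r 1 := hrmono hmem1 hmemu hu
    rw [Real.rpow_neg hrup.le]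
    apply inv_anti₀
    · exact Real.rpow_pos_of_pos hrup _
    · calc (r u) ^ ((1/2:ℝ)) ≤ (r 1) ^ ((1/2:ℝ)) :=
            Real.rpow_le_rpow hrup.le hrur1 (by norm_num)
        _ ≤ (r 1) ^ (1:ℝ) := Real.rpow_le_rpow_of_exponent_le hr1 (by norm_num)
        _ = r 1 := Real.rpow_one _
  -- combine
  have habsint : |∫ t in (1:ℝ)..u, ψ' t| ≤ ∫ t in Icc (1:ℝ) u, |ψ' t| := by
    refine le_trans (intervalIntegral.abs_integral_le_integral_abs hu) ?_
    rw [intervalIntegral.integral_of_le hu, ← hIcc_Ioc]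
  have key : |ψ u| ≤ |ψ 1| + ∫ t in Icc (1:ℝ) u, |ψ' t| := by
    have : ψ u = ψ 1 + ∫ t in (1:ℝ)..u, ψ' t := by rw [ftc1]; ring
    rw [this]
    exact le_trans (abs_add_le _ _) (by linarith [habsint])
  have hfin : ∫ t in Icc (1:ℝ) u, |ψ' t| ≤ (r u) ^ (-(1/2) : ℝ) * E := by
    refine le_trans CS ?_
    have h1 : 0 ≤ (∫ t in (1:ℝ)..u, (r t)^2 / (-ν t) * (ψ' t)^2) ^ ((1:ℝ)/2) :=
      Real.rpow_nonneg (by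
        apply intervalIntegral.integral_nonneg hu
        intro t ht
        have := hνpos t ht
        positivity) _
    have h2' : 0 ≤ ((r u)⁻¹ - (r 1)⁻¹) ^ ((1:ℝ)/2) := Real.rpow_nonneg (by
      have := inv_anti₀ (hrpos u hmemu) (hrmono hmem1 hmemu hu)
      linarith) _
    calc (∫ t in (1:ℝ)..u, (r t)^2 / (-ν t) * (ψ' t)^2) ^ ((1:ℝ)/2) *
            ((r u)⁻¹ - (r 1)⁻¹) ^ ((1:ℝ)/2)
        ≤ E * ((r u) ^ (-(1/2) : ℝ)) := mul_le_mul hEbd hgbd h2' hE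
      _ = (r u) ^ (-(1/2) : ℝ) * E := mul_comm _ _
  calc |ψ u| ≤ |ψ 1| + ∫ t in Icc (1:ℝ) u, |ψ' t| := key
    _ ≤ (r u) ^ (-(1/2) : ℝ) * D + (r u) ^ (-(1/2) : ℝ) * E := add_le_add hinitbd hfin
    _ = (r u) ^ (-(1/2) : ℝ) * (D + E) := by ring
end

section
/- Let $r : [u, \infty) \to (0, \infty)$ be $C^1$, non-increasing, with derivative $\nu < 0$, and fix $v$ with $r(u) \le v$. Let $\psi$ be $C^1$. Define $u_* \ge u$ by $r(u_*) = v/2$ if such a point exists, else $u_* = u$. Suppose $\sup_{u' }\int \frac{r^2}{(-\nu)}(\partial_u \psi)^2 \le \mathcal{E}_0^2$ on $[u, u_*]$, $\int_{u_*}^\infty \frac{r^2}{(-\nu)}(\partial_u\psi)^2 \le \tau_*^{-1} \mathcal{E}_1^2$ with $\tau_* \ge c v$ for some $c > 0$, and $r \ge r_{\min} > 0$ everywhere. Then $\int_u^\infty \frac{r}{(-\nu)}(\partial_u \psi)^2\, du' \le 2 v^{-1} \mathcal{E}_0^2 + c^{-1} r_{\min}^{-1} v^{-1} \mathcal{E}_1^2$.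 -/
open MeasureTheory Set

/-- Splitting argument for `v⁻¹`-decay of the `r`-weighted flux of `∂_u ψ`: split the
integration range at the point `u_*` where `r = v/2` (if it exists, else `u_* = u`);
use the `r²`-weighted energy in the inner region and the `τ`-decaying weighted energy
(with `τ_* ≥ c v`) in the outer region. -/
theorem stmt_15 (u v ustar c rmin τ E₀ E₁ : ℝ)
    (hc : 0 < c) (hrmin : 0 < rmin) (hτpos : 0 < τ) (hτ : c * v ≤ τ)
    (r ν ψ ψ' : ℝ → ℝ)
    (hr : ∀ t ≥ u, HasDerivAt r (ν t) t)
    (hν : ∀ t ≥ u, ν t < 0)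
    (hrmono : AntitoneOn r (Set.Ici u))
    (hrb : ∀ t ≥ u, rmin ≤ r t)
    (hψ : ∀ t ≥ u, HasDerivAt ψ (ψ' t) t)
    (hru : r u ≤ v)
    (hust : u ≤ ustar)
    (hdef : r ustar = v / 2 ∨ ustar = u)
    (h1 : ∫ t in Set.Ioc u ustar, (r t) ^ 2 / (-ν t) * (ψ' t) ^ 2 ≤ E₀ ^ 2)
    (h2 : ∫ t in Set.Ioi ustar, (r t) ^ 2 / (-ν t) * (ψ' t) ^ 2 ≤ τ⁻¹ * E₁ ^ 2) :
    ∫ t in Set.Ioi u, r t / (-ν t) * (ψ' t) ^ 2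
      ≤ 2 * v⁻¹ * E₀ ^ 2 + c⁻¹ * rmin⁻¹ * v⁻¹ * E₁ ^ 2 := by
  have hv : 0 < v := lt_of_lt_of_le (lt_of_lt_of_le hrmin (hrb u le_rfl)) hru
  set g : ℝ → ℝ := fun t => r t / (-ν t) * (ψ' t) ^ 2 with hgdef
  have hh : ∀ t, (r t) ^ 2 / (-ν t) * (ψ' t) ^ 2 = r t * g t := by
    intro t
    simp only [hgdef, div_eq_mul_inv]
    ring
  have hgnn : ∀ t ≥ u, 0 ≤ g t := by
    intro t ht
    have := hν t ht
    have h1 : 0 ≤ r t := le_trans hrmin.le (hrb t ht)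
    have h2 : 0 < -ν t := neg_pos.2 this
    positivity
  have hRHSnn : 0 ≤ 2 * v⁻¹ * E₀ ^ 2 + c⁻¹ * rmin⁻¹ * v⁻¹ * E₁ ^ 2 := by positivity
  by_cases hInt : IntegrableOn g (Set.Ioi u)
  · -- integrability on pieces
    have hsub1 : Set.Ioc u ustar ⊆ Set.Ioi u := Set.Ioc_subset_Ioi_self
    have hsub2 : Set.Ioi ustar ⊆ Set.Ioi u := Set.Ioi_subset_Ioi hust
    have hg1 : IntegrableOn g (Set.Ioc u ustar) := hInt.mono_set hsub1
    have hg2 : IntegrableOn g (Set.Ioi ustar) := hInt.mono_set hsub2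
    -- h = r * g integrable on pieces
    have hrcont : ∀ s : Set ℝ, s ⊆ Set.Ici u → ContinuousOn r s := by
      intro s hs
      exact fun t ht => ((hr t (hs ht)).continuousAt).continuousWithinAt
    have hhint : ∀ s : Set ℝ, MeasurableSet s → s ⊆ Set.Ioi u → IntegrableOn g s →
        IntegrableOn (fun t => r t * g t) s := by
      intro s hms hs hgi
      refine Integrable.mono' (hgi.const_mul (r u)) ?_ ?_
      · exact ((hrcont s (hs.trans Set.Ioi_subset_Ici_self)).aestronglyMeasurable hms).mul
          hgi.aestronglyMeasurable
      · refine (ae_restrict_iff' hms).2 (Filter.Eventually.of_forall fun t ht => ?_)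
        have htu : u ≤ t := le_of_lt (hs ht)
        have h0 : 0 ≤ r t := le_trans hrmin.le (hrb t htu)
        rw [Real.norm_eq_abs, abs_mul, abs_of_nonneg h0, abs_of_nonneg (hgnn t htu)]
        exact mul_le_mul_of_nonneg_right (hrmono (Set.self_mem_Ici) htu htu) (hgnn t htu)
    have hh1 : IntegrableOn (fun t => r t * g t) (Set.Ioc u ustar) :=
      hhint _ measurableSet_Ioc hsub1 hg1
    have hh2 : IntegrableOn (fun t => r t * g t) (Set.Ioi ustar) :=
      hhint _ measurableSet_Ioi hsub2 hg2
    -- rewrite h1 h2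
    rw [show (fun t => (r t) ^ 2 / (-ν t) * (ψ' t) ^ 2) = fun t => r t * g t from funext hh] at h1 h2
    -- split
    have hsplit : ∫ t in Set.Ioi u, g t
        = (∫ t in Set.Ioc u ustar, g t) + ∫ t in Set.Ioi ustar, g t := by
      rw [← Set.Ioc_union_Ioi_eq_Ioi hust]
      exact setIntegral_union (Set.Ioc_disjoint_Ioi le_rfl) measurableSet_Ioi hg1 hg2
    rw [hsplit]
    have inner : ∫ t in Set.Ioc u ustar, g t ≤ 2 * v⁻¹ * E₀ ^ 2 := by
      rcases hdef with hdef | hdef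
      · have step : ∫ t in Set.Ioc u ustar, g t
            ≤ ∫ t in Set.Ioc u ustar, (2 / v) * (r t * g t) := by
          refine setIntegral_mono_on hg1 (hh1.const_mul _) measurableSet_Ioc ?_
          intro t ht
          have htu : u ≤ t := le_of_lt ht.1
          have hrt : v / 2 ≤ r t := hdef ▸ hrmono htu hust ht.2
          have hg0 := hgnn t htu
          calc g t = (2 / v) * ((v / 2) * g t) := by field_simp
            _ ≤ (2 / v) * (r t * g t) := by
                refine mul_le_mul_of_nonneg_left (mul_le_mul_of_nonneg_right hrt hg0) (by positivity)
        rw [integral_const_mul] at step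
        calc ∫ t in Set.Ioc u ustar, g t ≤ (2 / v) * ∫ t in Set.Ioc u ustar, r t * g t := step
          _ ≤ (2 / v) * E₀ ^ 2 := by
              exact mul_le_mul_of_nonneg_left h1 (by positivity)
          _ = 2 * v⁻¹ * E₀ ^ 2 := by ring
      · rw [hdef]
        simp only [Set.Ioc_self, Measure.restrict_empty, integral_zero_measure]
        positivity
    have outer : ∫ t in Set.Ioi ustar, g t ≤ c⁻¹ * rmin⁻¹ * v⁻¹ * E₁ ^ 2 := by
      have step : ∫ t in Set.Ioi ustar, g t
          ≤ ∫ t in Set.Ioi ustar, rmin⁻¹ * (r t * g t) := by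
        refine setIntegral_mono_on hg2 (hh2.const_mul _) measurableSet_Ioi ?_
        intro t ht
        have htu : u ≤ t := le_of_lt (lt_of_le_of_lt hust ht)
        have hg0 := hgnn t htu
        calc g t = rmin⁻¹ * (rmin * g t) := by field_simp
          _ ≤ rmin⁻¹ * (r t * g t) := by
              refine mul_le_mul_of_nonneg_left (mul_le_mul_of_nonneg_right (hrb t htu) hg0)
                (by positivity)
      rw [integral_const_mul] at step
      have hτinv : τ⁻¹ ≤ (c * v)⁻¹ :=
        inv_anti₀ (by positivity) hτ
      calc ∫ t in Set.Ioi ustar, g t ≤ rmin⁻¹ * ∫ t in Set.Ioi ustar, r t * g t := step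
        _ ≤ rmin⁻¹ * (τ⁻¹ * E₁ ^ 2) := mul_le_mul_of_nonneg_left h2 (by positivity)
        _ ≤ rmin⁻¹ * ((c * v)⁻¹ * E₁ ^ 2) := by
            refine mul_le_mul_of_nonneg_left (mul_le_mul_of_nonneg_right hτinv (by positivity))
              (by positivity)
        _ = c⁻¹ * rmin⁻¹ * v⁻¹ * E₁ ^ 2 := by
            rw [mul_inv]; ring
    linarith
  · rw [integral_undef hInt]
    exact hRHSnn
end

section
/- Let $p > 0$ and let $\psi, r, \lambda, \nu$ be smooth on a region with $\lambda > 0$, $\nu < 0$. Suppose the wave-type identity $\partial_u \partial_v (r\psi) = r\kappa(-\nu)\Box\psi - \frac{2(\varpi - \mathbf{e}^2/r)}{r^2}\kappa(-\nu)\psi$ holds with $\Box\psi = 0$, and that $\kappa \le C_0$, $\varpi - \mathbf{e}^2/r$ bounded by $C_0$, $(-\nu) > 0$, $r$ is non-increasing in $u$ with $r \ge r_{\min} > 0$, and $|\psi| \le r^{-1/2} P$ pointwise. Then $|\partial_v(r\psi)(u,v)| \le |\partial_v(r\psi)(1,v)| + C C_0^2 P\, r(u,v)^{-3/2}$, where $C$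 is numerical. -/
open MeasureTheory Set

/-- Integrating the wave identity in `u` at fixed `v` (with vanishing wave source): there
is a numerical constant `C` such that if `Φ = ∂_v(rψ)` satisfies
`∂_u Φ = -(2(ϖ - e²/r)/r²) κ (-ν) ψ` on `[1,u]`, with `0 < κ ≤ C₀`,
`|ϖ - e²/r| ≤ C₀`, `ν = ∂_u r < 0`, `r ≥ r_min > 0`, and `|ψ| ≤ r^{-1/2} P`, then
`|Φ(u)| ≤ |Φ(1)| + C C₀² P r(u)^{-3/2}`. -/
theorem stmt_18 : ∃ C : ℝ, 0 < C ∧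
    ∀ (p u C₀ P rmin e2 : ℝ) (Φ ψ r ϖ κ ν : ℝ → ℝ),
      0 < p → 1 ≤ u → 0 < C₀ → 0 < rmin →
      (∀ s ∈ Set.Icc (1 : ℝ) u,
        HasDerivAt Φ (-(2 * (ϖ s - e2 / r s) / (r s) ^ 2) * κ s * (-ν s) * ψ s) s) →
      (∀ s ∈ Set.Icc (1 : ℝ) u, HasDerivAt r (ν s) s) →
      (∀ s ∈ Set.Icc (1 : ℝ) u, ν s < 0) →
      (∀ s ∈ Set.Icc (1 : ℝ) u, 0 < κ s ∧ κ s ≤ C₀) →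
      (∀ s ∈ Set.Icc (1 : ℝ) u, |ϖ s - e2 / r s| ≤ C₀) →
      (∀ s ∈ Set.Icc (1 : ℝ) u, rmin ≤ r s) →
      (∀ s ∈ Set.Icc (1 : ℝ) u, |ψ s| ≤ (r s) ^ (-(1/2) : ℝ) * P) →
      |Φ u| ≤ |Φ 1| + C * C₀ ^ 2 * P * (r u) ^ (-(3/2) : ℝ) := by
  refine ⟨2, by norm_num, ?_⟩
  intro p u C₀ P rmin e2 Φ ψ r ϖ κ ν hp hu hC₀ hrmin hΦ hr hν hκ hϖ hrge hψ
  have h1 : (1:ℝ) ∈ Icc (1:ℝ) u := ⟨le_refl 1, hu⟩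
  have hu' : u ∈ Icc (1:ℝ) u := ⟨hu, le_refl u⟩
  have hrpos : ∀ s ∈ Icc (1:ℝ) u, 0 < r s := fun s hs => lt_of_lt_of_le hrmin (hrge s hs)
  have hP : 0 ≤ P := by
    have h := hψ 1 h1
    have hr1 : (0:ℝ) < (r 1) ^ (-(1/2):ℝ) := Real.rpow_pos_of_pos (hrpos 1 h1) _
    nlinarith [abs_nonneg (ψ 1)]
  set K : ℝ := 2 * C₀ ^ 2 * P with hK
  have hKnn : 0 ≤ K := by positivity
  set B : ℝ → ℝ := fun s => |Φ 1| + K * (2/3) * ((r s) ^ (-(3/2):ℝ) - (r 1) ^ (-(3/2):ℝ))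
    with hBdef
  have hBderiv : ∀ s ∈ Icc (1:ℝ) u, HasDerivAt B (K * (-ν s) * (r s) ^ (-(5/2):ℝ)) s := by
    intro s hs
    have h := ((((hr s hs).rpow_const
        (p := (-(3/2):ℝ)) (Or.inl (hrpos s hs).ne')).sub_const
        ((r 1) ^ (-(3/2):ℝ))).const_mul (K * (2/3))).const_add (|Φ 1|)
    refine h.congr_deriv ?_
    rw [show (-(3/2):ℝ) - 1 = -(5/2) by norm_num]
    ring
  have hrcont : ContinuousOn r (Icc (1:ℝ) u) :=
    fun s hs => (hr s hs).continuousAt.continuousWithinAt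
  have hBcont : ContinuousOn B (Icc (1:ℝ) u) :=
    continuousOn_const.add (continuousOn_const.mul
      (((hrcont.rpow_const (fun s hs => Or.inl (hrpos s hs).ne'))).sub continuousOn_const))
  have hΦcont : ContinuousOn Φ (Icc (1:ℝ) u) :=
    fun s hs => (hΦ s hs).continuousAt.continuousWithinAt
  have key : ∀ ⦃x⦄, x ∈ Icc (1:ℝ) u → ‖Φ x‖ ≤ B x := by
    apply image_norm_le_of_norm_deriv_right_le_deriv_boundary' hΦcont
      (fun x hx => ((hΦ x (Ico_subset_Icc_self hx)).hasDerivWithinAt))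
      ?_ hBcont
      (fun x hx => ((hBderiv x (Ico_subset_Icc_self hx)).hasDerivWithinAt))
    · intro x hx
      have hx' : x ∈ Icc (1:ℝ) u := Ico_subset_Icc_self hx
      have hrx : 0 < r x := hrpos x hx'
      have hνx : 0 < -ν x := by linarith [hν x hx']
      have hκx := hκ x hx'
      have hϖx := hϖ x hx'
      have hψx := hψ x hx'
      have hr12 : (0:ℝ) < (r x) ^ (-(1/2):ℝ) := Real.rpow_pos_of_pos hrx _
      have hr52 : (r x) ^ (-(5/2):ℝ) = ((r x) ^ 2)⁻¹ * (r x) ^ (-(1/2):ℝ) := by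
        rw [show (-(5/2):ℝ) = (-2) + (-(1/2)) by norm_num, Real.rpow_add hrx]
        congr 1
        rw [show ((-2:ℝ)) = -((2:ℕ):ℝ) by norm_num, Real.rpow_neg hrx.le, Real.rpow_natCast]
      rw [Real.norm_eq_abs]
      have habs : |(-(2 * (ϖ x - e2 / r x) / (r x) ^ 2) * κ x * (-ν x) * ψ x)|
          = 2 * |ϖ x - e2 / r x| / (r x) ^ 2 * κ x * (-ν x) * |ψ x| := by
        rw [abs_mul, abs_mul, abs_mul, abs_neg, abs_div, abs_mul]
        rw [abs_of_pos hκx.1, abs_of_pos hνx, abs_of_pos (by positivity : (0:ℝ) < (r x)^2),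
          abs_of_nonneg (by norm_num : (0:ℝ) ≤ 2)]
      rw [habs, hr52]
      have hstep : 2 * |ϖ x - e2 / r x| / (r x) ^ 2 * κ x * (-ν x) * |ψ x|
          ≤ 2 * C₀ / (r x) ^ 2 * C₀ * (-ν x) * ((r x) ^ (-(1/2):ℝ) * P) := by
        have h2 : (0:ℝ) < (r x)^2 := by positivity
        gcongr <;> first
          | exact abs_nonneg _
          | exact hκx.1.le
          | exact hϖx
          | exact hκx.2
          | exact hψx
          | positivity
      calc 2 * |ϖ x - e2 / r x| / (r x) ^ 2 * κ x * (-ν x) * |ψ x|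
          ≤ 2 * C₀ / (r x) ^ 2 * C₀ * (-ν x) * ((r x) ^ (-(1/2):ℝ) * P) := hstep
        _ = K * (-ν x) * (((r x) ^ 2)⁻¹ * (r x) ^ (-(1/2):ℝ)) := by
            rw [hK]; field_simp
    · simp [hBdef, Real.norm_eq_abs]
  have hend := key hu'
  rw [Real.norm_eq_abs] at hend
  have hr1nn : (0:ℝ) ≤ (r 1) ^ (-(3/2):ℝ) := Real.rpow_nonneg (hrpos 1 h1).le _
  have hrunn : (0:ℝ) ≤ (r u) ^ (-(3/2):ℝ) := Real.rpow_nonneg (hrpos u hu').le _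
  have hBu : B u ≤ |Φ 1| + K * (r u) ^ (-(3/2):ℝ) := by
    have h := mul_nonneg hKnn hr1nn
    have h2 := mul_nonneg hKnn hrunn
    simp only [hBdef]
    nlinarith
  exact hend.trans hBu
end
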